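/- Let k be a finite field and let r ≥ 1. Let p ∈ k[x,y] be a monic homogeneous polynomial of degree r+1 that is divisible by y (monic means p(x,1) is monic as a univariate polynomial). (1) If g, h ∈ k[x,y] are coprime homogeneous polynomials with h monic of degree r and g of degree at most r, and x·h − y·g = c·p for some c ∈ k^×, then the greatest common divisor of h and p is (an associate of) y, and c·p ≢ x·h (mod y²). (2) Conversely, if h ∈ k[x,y] is monic homogeneous of degree r whose greatest common divisor with p is y, and c ∈ k^× satisfies c·p ≢ x·h (mod y²), then y divides x·h − c·p, the quotient g := (x·h − c·p)/y is homogeneous of degree r, not divisible by y, coprime to h, and satisfies x·h − y·g = c·p. -/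

import Mathlib

open MvPolynomial

/-- The dehomogenization of a bivariate polynomial: set `y = 1`. -/
noncomputable def dehom {k : Type*} [CommSemiring k] (p : MvPolynomial (Fin 2) k) :
    Polynomial k :=
  MvPolynomial.aeval (fun i : Fin 2 => if i = 0 then Polynomial.X else 1) p

/-- A homogeneous polynomial `p ∈ k[x,y]` is monic if `p(x,1)` is monic. -/
def MonicHom {k : Type*} [CommSemiring k] (p : MvPolynomial (Fin 2) k) : Prop :=
  (dehom p).Monic

private lemma primeX1 (k : Type*) [Field k] : Prime (X 1 : MvPolynomial (Fin 2) k) := by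
  have h1 : Prime (X 0 : MvPolynomial (Fin 1) k) := by
    rw [← MulEquiv.prime_iff (MvPolynomial.finSuccEquiv k 0).toMulEquiv]
    show Prime (MvPolynomial.finSuccEquiv k 0 (X 0))
    rw [finSuccEquiv_X_zero]; exact Polynomial.prime_X
  rw [← MulEquiv.prime_iff (MvPolynomial.finSuccEquiv k 1).toMulEquiv]
  show Prime (MvPolynomial.finSuccEquiv k 1 (X 1))
  have : (1 : Fin 2) = Fin.succ 0 := rfl
  rw [this, finSuccEquiv_X_succ]
  exact (Polynomial.prime_C_iff).mpr h1

private lemma hom_div {k : Type*} [Field k] {n : ℕ} {g : MvPolynomial (Fin 2) k}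
    (h : (X 1 * g).IsHomogeneous (n + 1)) : g.IsHomogeneous n := by
  intro d hd
  have h2 := h (d := Finsupp.single 1 1 + d) (by rwa [coeff_X_mul])
  rw [map_add] at h2
  have h3 : (Finsupp.weight 1) (Finsupp.single (1 : Fin 2) 1) = 1 := by
    simp [Finsupp.weight_apply, Finsupp.sum_single_index]
  rw [h3] at h2
  omega

private lemma not_X1_dvd_X0 (k : Type*) [Field k] :
    ¬ (X 1 : MvPolynomial (Fin 2) k) ∣ X 0 := by
  intro hdvd
  have := map_dvd (eval (fun i : Fin 2 => if i = 0 then (1 : k) else 0)) hdvd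
  simp at this

/-- second case of Proposition 2.6 of the paper: `p` monic
homogeneous of degree `r+1`, divisible by `y`.
(1) If `x·h − y·g = c·p` with `g, h` coprime, `h` monic homogeneous of degree `r`,
`g` homogeneous of degree at most `r`, and `c ≠ 0`, then `gcd(h,p)` is an associate
of `y` and `c·p ≢ x·h (mod y²)`.
(2) Conversely, if `h` is monic homogeneous of degree `r` with `gcd(h,p) = y` and
`c ≠ 0` with `c·p ≢ x·h (mod y²)`, then `y ∣ x·h − c·p` and the quotient `g` is
homogeneous of degree `r`, not divisible by `y`, coprime to `h`, with
`x·h − y·g = c·p`. -/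
theorem stmt_6 (k : Type*) [Field k] [Fintype k] (r : ℕ) (hr : 1 ≤ r)
    (p : MvPolynomial (Fin 2) k) (hp : p.IsHomogeneous (r + 1)) (hpm : MonicHom p)
    (hpy : X 1 ∣ p) :
    (∀ g h : MvPolynomial (Fin 2) k, h.IsHomogeneous r → MonicHom h →
      (∃ s ≤ r, g.IsHomogeneous s) → IsRelPrime g h →
      ∀ c : k, c ≠ 0 → X 0 * h - X 1 * g = C c * p →
        (X 1 ∣ h ∧ (∀ d : MvPolynomial (Fin 2) k, d ∣ h → d ∣ p → d ∣ X 1) ∧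
          ¬ (X 1 ^ 2 ∣ (C c * p - X 0 * h))))
    ∧
    (∀ h : MvPolynomial (Fin 2) k, h.IsHomogeneous r → MonicHom h →
      X 1 ∣ h → (∀ d : MvPolynomial (Fin 2) k, d ∣ h → d ∣ p → d ∣ X 1) →
      ∀ c : k, c ≠ 0 → ¬ (X 1 ^ 2 ∣ (C c * p - X 0 * h)) →
        ∃ g : MvPolynomial (Fin 2) k,
          X 0 * h - C c * p = X 1 * g ∧ g.IsHomogeneous r ∧ ¬ (X 1 ∣ g) ∧
          IsRelPrime g h ∧ X 0 * h - X 1 * g = C c * p) := by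
  have hX := primeX1 k
  constructor
  · intro g h hh hhm ⟨s, hs, hg⟩ hcop c hc heq
    have hyh : X 1 ∣ h := by
      have hd : X 1 ∣ X 0 * h := by
        rw [show X 0 * h = C c * p + X 1 * g by linear_combination heq]
        exact dvd_add (hpy.mul_left _) (dvd_mul_right _ _)
      rcases hX.dvd_mul.mp hd with h1 | h1
      · exact absurd h1 (not_X1_dvd_X0 k)
      · exact h1
    refine ⟨hyh, ?_, ?_⟩
    · intro d hdh hdp
      have h1 : d ∣ X 1 * g := by
        rw [show X 1 * g = X 0 * h - C c * p by linear_combination -heq]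
        exact dvd_sub (hdh.mul_left _) (hdp.mul_left _)
      have hdg : IsRelPrime d g := fun e hed heg => hcop heg (hed.trans hdh)
      exact hdg.dvd_of_dvd_mul_right h1
    · intro hdvd
      have h2 : X 1 * X 1 ∣ X 1 * g := by
        rw [show C c * p - X 0 * h = -(X 1 * g) by linear_combination -heq,
          dvd_neg] at hdvd
        rwa [← sq]
      have h3 : X 1 ∣ g := (mul_dvd_mul_iff_left hX.ne_zero).mp h2
      exact hX.not_unit (hcop h3 hyh)
  · intro h hh hhm hyh hgcd c hc hnd
    obtain ⟨h1, hh1⟩ := hyh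
    obtain ⟨p1, hp1⟩ := hpy
    have key : X 0 * h - C c * p = X 1 * (X 0 * h1 - C c * p1) := by
      rw [hh1, hp1]; ring
    have hndvd : ¬ X 1 ∣ (X 0 * h1 - C c * p1) := by
      intro hdvd
      apply hnd
      rw [show C c * p - X 0 * h = -(X 1 * (X 0 * h1 - C c * p1)) by
        rw [hh1, hp1]; ring, dvd_neg, sq]
      exact mul_dvd_mul_left _ hdvd
    refine ⟨X 0 * h1 - C c * p1, key, ?_, hndvd, ?_, ?_⟩
    · apply hom_div (n := r)
      rw [← key]
      have hx0h : (X 0 * h).IsHomogeneous (r + 1) := by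
        have := (isHomogeneous_X k (0 : Fin 2)).mul hh
        rwa [add_comm] at this
      exact hx0h.sub (hp.C_mul c)
    · intro d hdg hdh
      have hdp : d ∣ p := by
        have hd1 : d ∣ X 1 * (X 0 * h1 - C c * p1) := hdg.mul_left _
        rw [← key] at hd1
        have h3 : d ∣ C c * p := (dvd_sub_right (hdh.mul_left _)).mp hd1
        exact ((hc.isUnit.map (C : k →+* MvPolynomial (Fin 2) k)).dvd_mul_left).mp h3
      have hd1 : d ∣ X 1 := hgcd d hdh hdp
      rcases hd1 with ⟨e, he⟩
      rcases hX.irreducible.isUnit_or_isUnit he with hu | hu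
      · exact hu
      · exfalso
        apply hndvd
        obtain ⟨u, hu'⟩ := hu
        have hX1d : X 1 ∣ d := ⟨↑u⁻¹, by rw [he, ← hu', mul_assoc, Units.mul_inv, mul_one]⟩
        exact hX1d.trans hdg
    · linear_combination key
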